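/- arXiv:1808.06100 — 2 statements merged into one kernel-verified Lean document; each statement's English description precedes it below -/
import Mathlib

section
/- Let K ⊆ ℝ^n be a nonempty closed set and f : ℝ^n → ℝ a polynomial of degree d ≥ 1. If f is bounded from below on K, then f_d(v) ≥ 0 for every v in the asymptotic cone K∞; in particular 0 ∈ Sol(K∞, f_d). Consequently, if Sol(K∞, f_d) = ∅ then f is not bounded from below on K and Sol(K,f) = ∅. -/
open Filter Topology MvPolynomial Bornology
open scoped RealInnerProductSpace Pointwise

noncomputable section

/-- `ℝ^n` as Euclidean space. -/
abbrev En (n : ℕ) := EuclideanSpace ℝ (Fin n)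

/-- Evaluation of a multivariate polynomial at a point of `ℝ^n`. -/
def evalP {n : ℕ} (f : MvPolynomial (Fin n) ℝ) (x : En n) : ℝ :=
  MvPolynomial.eval (fun i => x i) f

/-- `Sol(C,g)`: the set of global minimizers of `g` on `C`. -/
def solSet {n : ℕ} (C : Set (En n)) (g : En n → ℝ) : Set (En n) :=
  {x ∈ C | ∀ y ∈ C, g x ≤ g y}

/-- `K∞`: the asymptotic cone of `K`. -/
def asympCone {n : ℕ} (K : Set (En n)) : Set (En n) :=
  {v | ∃ (t : ℕ → ℝ) (x : ℕ → En n), (∀ k, x k ∈ K) ∧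
    Tendsto t atTop atTop ∧ Tendsto (fun k => (t k)⁻¹ • x k) atTop (𝓝 v)}

/-- The gradient `∇f` of a polynomial, via its partial derivatives. -/
def polyGrad {n : ℕ} (f : MvPolynomial (Fin n) ℝ) (x : En n) : En n :=
  WithLp.toLp 2 (fun i => MvPolynomial.eval (fun j => x j) (MvPolynomial.pderiv i f))

/-- The `ℓ2`-norm of the coefficient vector of a polynomial. -/
def l2Norm {n : ℕ} (p : MvPolynomial (Fin n) ℝ) : ℝ :=
  Real.sqrt (∑ m ∈ p.support, (MvPolynomial.coeff m p) ^ 2)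

/-- `S` is generic (residual) in `X`: it contains a countable intersection of sets, each of
which is open and dense in `X` (with respect to the `ℓ2` coefficient metric). -/
def IsGenericIn {n : ℕ} (X S : Set (MvPolynomial (Fin n) ℝ)) : Prop :=
  ∃ D : ℕ → Set (MvPolynomial (Fin n) ℝ),
    (∀ k, D k ⊆ X ∧
      (∀ g ∈ D k, ∃ ε > 0, ∀ g' ∈ X, l2Norm (g' - g) < ε → g' ∈ D k) ∧
      (∀ g ∈ X, ∀ ε > 0, ∃ g' ∈ D k, l2Norm (g' - g) < ε)) ∧
    X ∩ (⋂ k, D k) ⊆ S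

lemma aux_eval_smul {n j : ℕ} {p : MvPolynomial (Fin n) ℝ}
    (hp : p.IsHomogeneous j) (c : ℝ) (x : En n) :
    evalP p (c • x) = c ^ j * evalP p x := by
  show MvPolynomial.eval (fun i => (c • x) i) p = _
  have hsm : (fun i => (c • x) i) = fun i => c * x i := by
    funext i; simp [PiLp.smul_apply, smul_eq_mul]
  rw [hsm]
  unfold evalP
  rw [eval_eq', eval_eq', Finset.mul_sum]
  refine Finset.sum_congr rfl fun m hm => ?_
  have hc : coeff m p ≠ 0 := mem_support_iff.mp hm
  have hdeg : ∑ i, m i = j := by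
    have := hp hc
    rw [Finsupp.weight_apply] at this
    rw [← this, Finsupp.sum, Finset.sum_subset (Finset.subset_univ m.support)]
    · simp
    · intro i _ hi
      simp [Finsupp.notMem_support_iff.mp hi]
  have he : ∀ i : Fin n, (c * x i) ^ m i = c ^ m i * x i ^ m i := fun i => mul_pow _ _ _
  simp_rw [he]
  rw [Finset.prod_mul_distrib, Finset.prod_pow_eq_pow_sum, hdeg]
  ring

lemma aux_cont {n : ℕ} (p : MvPolynomial (Fin n) ℝ) : Continuous (evalP p) := by
  have h1 : Continuous fun x : Fin n → ℝ => MvPolynomial.eval x p := p.continuous_eval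
  exact h1.comp (continuous_pi fun i => (continuous_apply i).comp (PiLp.continuous_ofLp 2 _))

-- main limit lemma
lemma aux_lim {n d : ℕ} (hd : 1 ≤ d) (f : MvPolynomial (Fin n) ℝ) (hdeg : f.totalDegree = d)
    (t : ℕ → ℝ) (x : ℕ → En n) (v : En n)
    (ht : Tendsto t atTop atTop) (hx : Tendsto (fun k => (t k)⁻¹ • x k) atTop (𝓝 v)) :
    Tendsto (fun k => ((t k)⁻¹) ^ d * evalP f (x k)) atTop
      (𝓝 (evalP (homogeneousComponent d f) v)) := by
  set u : ℕ → En n := fun k => (t k)⁻¹ • x k with hu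
  set F : ℕ → ℝ := fun k =>
    ∑ j ∈ Finset.range (d + 1), ((t k)⁻¹) ^ (d - j) * evalP (homogeneousComponent j f) (u k)
      with hF
  have htinv : Tendsto (fun k => (t k)⁻¹) atTop (𝓝 0) := ht.inv_tendsto_atTop
  have hFlim : Tendsto F atTop (𝓝 (∑ j ∈ Finset.range (d + 1),
      (0:ℝ) ^ (d - j) * evalP (homogeneousComponent j f) v)) := by
    apply tendsto_finset_sum
    intro j _
    exact ((htinv.pow (d - j)).mul (((aux_cont _).tendsto v).comp hx))
  have hsum : (∑ j ∈ Finset.range (d + 1),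
      (0:ℝ) ^ (d - j) * evalP (homogeneousComponent j f) v)
      = evalP (homogeneousComponent d f) v := by
    rw [Finset.sum_eq_single d]
    · simp
    · intro j hj hjd
      rw [Finset.mem_range] at hj
      have : 0 < d - j := by omega
      rw [zero_pow (by omega)]
      ring
    · intro h; exact absurd (Finset.self_mem_range_succ d) h
  rw [hsum] at hFlim
  refine hFlim.congr' ?_
  filter_upwards [ht.eventually_gt_atTop 0] with k hk
  have htk : t k ≠ 0 := ne_of_gt hk
  have hxk : x k = t k • u k := by
    rw [hu]; simp [smul_smul, mul_inv_cancel₀ htk]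
  rw [hF]
  have hfe : evalP f (x k) = ∑ j ∈ Finset.range (d + 1),
      (t k) ^ j * evalP (homogeneousComponent j f) (u k) := by
    conv_lhs => rw [← f.sum_homogeneousComponent]
    rw [hdeg, hxk]
    unfold evalP
    rw [map_sum]
    exact Finset.sum_congr rfl fun j _ =>
      aux_eval_smul (homogeneousComponent_isHomogeneous j f) (t k) (u k)
  rw [hfe, Finset.mul_sum]
  refine Finset.sum_congr rfl fun j hj => ?_
  rw [Finset.mem_range] at hj
  have hj' : j ≤ d := by omega
  have : ((t k)⁻¹) ^ d * ((t k) ^ j * evalP (homogeneousComponent j f) (u k))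
      = (((t k)⁻¹) ^ d * (t k) ^ j) * evalP (homogeneousComponent j f) (u k) := by ring
  rw [this]
  congr 1
  rw [pow_sub₀ _ (inv_ne_zero htk) hj']; simp [inv_pow]


/-- If `f` is bounded from below on `K`, then `f_d ≥ 0` on `K∞` and `0 ∈ Sol(K∞, f_d)`.
Consequently, if `Sol(K∞, f_d) = ∅` then `f` is not bounded from below on `K` and
`Sol(K,f) = ∅`. -/
theorem stmt3 {n d : ℕ} (hd : 1 ≤ d) (K : Set (En n)) (hKne : K.Nonempty) (hKcl : IsClosed K)
    (f : MvPolynomial (Fin n) ℝ) (hdeg : f.totalDegree = d) :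
    (BddBelow (evalP f '' K) →
      (∀ v ∈ asympCone K, 0 ≤ evalP (homogeneousComponent d f) v) ∧
      (0 : En n) ∈ solSet (asympCone K) (evalP (homogeneousComponent d f))) ∧
    (solSet (asympCone K) (evalP (homogeneousComponent d f)) = ∅ →
      ¬ BddBelow (evalP f '' K) ∧ solSet K (evalP f) = ∅) := by
  -- 0 belongs to the asymptotic cone
  obtain ⟨x₀, hx₀⟩ := hKne
  have h0cone : (0 : En n) ∈ asympCone K := by
    refine ⟨fun k => (k : ℝ) + 1, fun _ => x₀, fun _ => hx₀, ?_, ?_⟩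
    · exact tendsto_atTop_add_const_right _ 1 tendsto_natCast_atTop_atTop
    · have h1 : Tendsto (fun k : ℕ => ((k : ℝ) + 1)⁻¹) atTop (𝓝 0) :=
        tendsto_inv_atTop_zero.comp (tendsto_atTop_add_const_right _ 1 tendsto_natCast_atTop_atTop)
      have := h1.smul_const x₀
      rwa [zero_smul] at this
  have hval0 : evalP (homogeneousComponent d f) (0 : En n) = 0 := by
    have h := aux_eval_smul (homogeneousComponent_isHomogeneous d f) (0 : ℝ) (0 : En n)
    rw [zero_smul, zero_pow (by omega : d ≠ 0), zero_mul] at h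
    exact h
  have main : BddBelow (evalP f '' K) →
      (∀ v ∈ asympCone K, 0 ≤ evalP (homogeneousComponent d f) v) ∧
      (0 : En n) ∈ solSet (asympCone K) (evalP (homogeneousComponent d f)) := by
    intro hbdd
    obtain ⟨B, hB⟩ := hbdd
    have hBle : ∀ x ∈ K, B ≤ evalP f x := fun x hx => hB ⟨x, hx, rfl⟩
    have hpos : ∀ v ∈ asympCone K, 0 ≤ evalP (homogeneousComponent d f) v := by
      rintro v ⟨t, x, hxK, ht, hx⟩
      have hlim := aux_lim hd f hdeg t x v ht hx
      have htinv : Tendsto (fun k => (t k)⁻¹) atTop (𝓝 0) := ht.inv_tendsto_atTop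
      have hzero : Tendsto (fun k => ((t k)⁻¹) ^ d * B) atTop (𝓝 0) := by
        have := (htinv.pow d).mul_const B
        rwa [zero_pow (by omega : d ≠ 0), zero_mul] at this
      refine le_of_tendsto_of_tendsto hzero hlim ?_
      filter_upwards [ht.eventually_gt_atTop 0] with k hk
      exact mul_le_mul_of_nonneg_left (hBle (x k) (hxK k)) (pow_nonneg (inv_nonneg.mpr hk.le) d)
    exact ⟨hpos, ⟨h0cone, fun y hy => by rw [hval0]; exact hpos y hy⟩⟩
  refine ⟨main, fun hemp => ?_⟩
  have hnb : ¬ BddBelow (evalP f '' K) := by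
    intro hbdd
    have := (main hbdd).2
    rw [hemp] at this
    exact this
  refine ⟨hnb, ?_⟩
  rw [Set.eq_empty_iff_forall_notMem]
  rintro x ⟨hxK, hxmin⟩
  exact hnb ⟨evalP f x, by rintro y ⟨z, hz, rfl⟩; exact hxmin z hz⟩

end
end

section
/- Let K ⊆ ℝ^n be a nonempty closed set and d ≥ 1. The set R_K of all polynomials g of degree exactly d such that Sol(K∞, g_d) is bounded is open in the space P_d of polynomials of degree at most d. -/
open Filter Topology MvPolynomial Bornology
open scoped RealInnerProductSpace Pointwise

noncomputable section

lemma abs_coord_le {n : ℕ} (v : En n) (i : Fin n) : |v i| ≤ ‖v‖ := by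
  rw [EuclideanSpace.norm_eq, ← Real.sqrt_sq_eq_abs]
  apply Real.sqrt_le_sqrt
  have := Finset.single_le_sum (f := fun j => ‖v j‖ ^ 2) (fun j _ => sq_nonneg _)
    (Finset.mem_univ i)
  simpa [Real.norm_eq_abs, sq_abs] using this

lemma zero_mem_asympCone {n : ℕ} (K : Set (En n)) (hK : K.Nonempty) : (0 : En n) ∈ asympCone K := by
  obtain ⟨x0, hx0⟩ := hK
  have ht : Tendsto (fun k : ℕ => (k : ℝ) + 1) atTop atTop :=
    tendsto_atTop_add_const_right _ 1 tendsto_natCast_atTop_atTop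
  refine ⟨fun k => (k : ℝ) + 1, fun _ => x0, fun _ => hx0, ht, ?_⟩
  have h2 : Tendsto (fun k : ℕ => ((k : ℝ) + 1)⁻¹) atTop (𝓝 0) := tendsto_inv_atTop_zero.comp ht
  simpa using h2.smul_const x0

lemma smul_mem_asympCone {n : ℕ} {K : Set (En n)} {v : En n} (hv : v ∈ asympCone K)
    {c : ℝ} (hc : 0 < c) : c • v ∈ asympCone K := by
  obtain ⟨t, x, hx, ht, hlim⟩ := hv
  refine ⟨fun k => t k / c, x, hx, ht.atTop_div_const hc, ?_⟩
  have : (fun k => (t k / c)⁻¹ • x k) = fun k => c • ((t k)⁻¹ • x k) := by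
    funext k
    rw [div_eq_mul_inv, mul_inv, inv_inv, mul_comm, mul_smul]
  rw [this]
  exact hlim.const_smul c

lemma isClosed_asympCone {n : ℕ} (K : Set (En n)) : IsClosed (asympCone K) := by
  apply IsSeqClosed.isClosed
  intro u v hu huv
  have key : ∀ j : ℕ, ∃ (s : ℝ) (y : En n), y ∈ K ∧ (j : ℝ) + 1 ≤ s ∧
      dist (s⁻¹ • y) (u j) < 1 / ((j : ℝ) + 1) := by
    intro j
    obtain ⟨t, x, hx, ht, hlim⟩ := hu j
    have h1 : ∀ᶠ k in atTop, (j : ℝ) + 1 ≤ t k := ht.eventually_ge_atTop _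
    have h2 : ∀ᶠ k in atTop, dist ((t k)⁻¹ • x k) (u j) < 1 / ((j : ℝ) + 1) := by
      have : (0 : ℝ) < 1 / ((j : ℝ) + 1) := by positivity
      exact (Metric.tendsto_nhds.mp hlim _ this)
    obtain ⟨k, hk1, hk2⟩ := (h1.and h2).exists
    exact ⟨t k, x k, hx k, hk1, hk2⟩
  choose s y hy hs hd using key
  refine ⟨s, y, hy, ?_, ?_⟩
  · exact tendsto_atTop_mono hs (tendsto_atTop_add_const_right _ 1 tendsto_natCast_atTop_atTop)
  · rw [tendsto_iff_dist_tendsto_zero]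
    refine squeeze_zero (g := fun j : ℕ => 1 / ((j : ℝ) + 1) + dist (u j) v)
      (fun j => dist_nonneg) ?_ ?_
    · intro j
      calc dist ((s j)⁻¹ • y j) v ≤ dist ((s j)⁻¹ • y j) (u j) + dist (u j) v := dist_triangle _ _ _
        _ ≤ 1 / ((j : ℝ) + 1) + dist (u j) v := by gcongr; exact (hd j).le
    · have h2 : Tendsto (fun j => dist (u j) v) atTop (𝓝 0) :=
        tendsto_iff_dist_tendsto_zero.mp huv
      simpa using tendsto_one_div_add_atTop_nhds_zero_nat.add h2
lemma l2Norm_nonneg {n : ℕ} (p : MvPolynomial (Fin n) ℝ) : 0 ≤ l2Norm p := Real.sqrt_nonneg _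

lemma abs_coeff_le_l2Norm {n : ℕ} (p : MvPolynomial (Fin n) ℝ) (m : Fin n →₀ ℕ) :
    |coeff m p| ≤ l2Norm p := by
  by_cases h : coeff m p = 0
  · simp [h, l2Norm_nonneg]
  · rw [← Real.sqrt_sq_eq_abs]
    exact Real.sqrt_le_sqrt (Finset.single_le_sum (f := fun m => coeff m p ^ 2)
      (fun m _ => sq_nonneg _) (mem_support_iff.mpr h))

lemma l2Norm_homogeneousComponent_le {n d : ℕ} (p : MvPolynomial (Fin n) ℝ) :
    l2Norm (homogeneousComponent d p) ≤ l2Norm p := by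
  apply Real.sqrt_le_sqrt
  have hsub : (homogeneousComponent d p).support ⊆ p.support := by
    intro m hm
    rw [mem_support_iff, coeff_homogeneousComponent] at hm
    rw [mem_support_iff]
    by_cases h : m.degree = d
    · rwa [if_pos h] at hm
    · rw [if_neg h] at hm; exact absurd rfl hm
  calc ∑ m ∈ (homogeneousComponent d p).support, coeff m (homogeneousComponent d p) ^ 2
      ≤ ∑ m ∈ (homogeneousComponent d p).support, coeff m p ^ 2 := by
        apply Finset.sum_le_sum
        intro m hm
        rw [coeff_homogeneousComponent]
        by_cases h : m.degree = d
        · rw [if_pos h]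
        · rw [if_neg h]; simpa using sq_nonneg (coeff m p)
    _ ≤ ∑ m ∈ p.support, coeff m p ^ 2 :=
        Finset.sum_le_sum_of_subset_of_nonneg hsub (fun m _ _ => sq_nonneg _)

lemma card_support_le {n d : ℕ} (p : MvPolynomial (Fin n) ℝ) (hp : p.totalDegree ≤ d) :
    p.support.card ≤ (d + 1) ^ n := by
  classical
  have hbd : ∀ m ∈ p.support, ∀ i, m i ≤ d := by
    intro m hm i
    exact le_trans (Finsupp.le_degree i m) (le_trans (le_totalDegree hm) hp)
  have hdd : 0 < d + 1 := Nat.succ_pos d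
  have hcard : p.support.card ≤ Fintype.card (Fin n → Fin (d + 1)) := by
    apply Finset.card_le_card_of_injOn
      (f := fun m : Fin n →₀ ℕ => fun i : Fin n => (⟨m i % (d + 1), Nat.mod_lt _ hdd⟩ : Fin (d + 1)))
      (fun m _ => Finset.mem_univ _)
    intro m hm m' hm' h
    ext i
    have h1 : m i % (d + 1) = m' i % (d + 1) := by
      have := congrFun h i
      simpa using this
    rwa [Nat.mod_eq_of_lt (Nat.lt_succ_of_le (hbd m hm i)),
      Nat.mod_eq_of_lt (Nat.lt_succ_of_le (hbd m' hm' i))] at h1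
  calc p.support.card ≤ Fintype.card (Fin n → Fin (d + 1)) := hcard
    _ = (d + 1) ^ n := by simp [Fintype.card_fun]
lemma abs_evalP_le {n d : ℕ} (p : MvPolynomial (Fin n) ℝ) (hp : p.totalDegree ≤ d)
    (v : En n) (hv : ‖v‖ ≤ 1) :
    |evalP p v| ≤ (((d + 1) ^ n : ℕ) : ℝ) * l2Norm p := by
  rw [evalP, eval_eq]
  have hmono : ∀ m : Fin n →₀ ℕ, |∏ i ∈ m.support, v i ^ m i| ≤ 1 := by
    intro m
    rw [Finset.abs_prod]
    apply Finset.prod_le_one (fun i _ => abs_nonneg _)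
    intro i _
    rw [abs_pow]
    exact pow_le_one₀ (abs_nonneg _) (le_trans (abs_coord_le v i) hv)
  calc |∑ m ∈ p.support, coeff m p * ∏ i ∈ m.support, (fun i => v i) i ^ m i|
      ≤ ∑ m ∈ p.support, |coeff m p * ∏ i ∈ m.support, v i ^ m i| :=
        Finset.abs_sum_le_sum_abs _ _
    _ ≤ ∑ m ∈ p.support, l2Norm p := by
        apply Finset.sum_le_sum
        intro m _
        rw [abs_mul]
        calc |coeff m p| * |∏ i ∈ m.support, v i ^ m i| ≤ |coeff m p| * 1 :=
              mul_le_mul_of_nonneg_left (hmono m) (abs_nonneg _)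
          _ = |coeff m p| := mul_one _
          _ ≤ l2Norm p := abs_coeff_le_l2Norm p m
    _ = (p.support.card : ℝ) * l2Norm p := by rw [Finset.sum_const, nsmul_eq_mul]
    _ ≤ (((d + 1) ^ n : ℕ) : ℝ) * l2Norm p := by
        apply mul_le_mul_of_nonneg_right _ (l2Norm_nonneg p)
        exact_mod_cast card_support_le p hp

lemma evalP_hc_smul {n d : ℕ} (g : MvPolynomial (Fin n) ℝ) (c : ℝ) (v : En n) :
    evalP (homogeneousComponent d g) (c • v) = c ^ d * evalP (homogeneousComponent d g) v := by
  rw [evalP, evalP, eval_eq, eval_eq, Finset.mul_sum]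
  apply Finset.sum_congr rfl
  intro m hm
  have hdeg : ∑ i ∈ m.support, m i = d := by
    rw [mem_support_iff, coeff_homogeneousComponent] at hm
    by_cases h : m.degree = d
    · exact h
    · rw [if_neg h] at hm; exact absurd rfl hm
  have hcv : ∀ i, (fun i => (c • v) i) i = c * v i := fun i => rfl
  simp_rw [hcv]
  rw [show (∏ i ∈ m.support, (c * v i) ^ m i)
      = (∏ i ∈ m.support, c ^ m i) * ∏ i ∈ m.support, v i ^ m i by
    rw [← Finset.prod_mul_distrib]; exact Finset.prod_congr rfl fun i _ => mul_pow _ _ _]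
  rw [Finset.prod_pow_eq_pow_sum, hdeg]
  ring

lemma evalP_hc_zero {n d : ℕ} (hd : 1 ≤ d) (g : MvPolynomial (Fin n) ℝ) :
    evalP (homogeneousComponent d g) 0 = 0 := by
  have := evalP_hc_smul (d := d) g 0 0
  rw [smul_zero] at this
  rw [this, zero_pow (by omega), zero_mul]

lemma continuous_evalP {n : ℕ} (f : MvPolynomial (Fin n) ℝ) : Continuous (evalP f) := by
  have h1 : Continuous fun x : En n => (fun i => x i : Fin n → ℝ) :=
    continuous_pi fun i => by
      exact (continuous_apply i).comp (PiLp.continuous_ofLp 2 fun _ : Fin n => ℝ)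
  exact (MvPolynomial.continuous_eval f).comp h1
lemma solSet_bounded_of_pos {n d : ℕ} (hd : 1 ≤ d) {K : Set (En n)}
    (h0 : (0 : En n) ∈ asympCone K)
    (hcone : ∀ v ∈ asympCone K, ∀ c : ℝ, 0 < c → c • v ∈ asympCone K)
    (q : MvPolynomial (Fin n) ℝ)
    (hpos : ∀ v ∈ asympCone K, ‖v‖ = 1 → 0 < evalP (homogeneousComponent d q) v) :
    IsBounded (solSet (asympCone K) (evalP (homogeneousComponent d q))) := by
  apply Bornology.IsBounded.subset (Bornology.isBounded_singleton (x := (0 : En n)))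
  rintro x ⟨hxK, hxmin⟩
  simp only [Set.mem_singleton_iff]
  by_contra hx0
  have hnx : 0 < ‖x‖ := norm_pos_iff.mpr hx0
  set u := ‖x‖⁻¹ • x with hu
  have huK : u ∈ asympCone K := hcone x hxK _ (inv_pos.mpr hnx)
  have hu1 : ‖u‖ = 1 := by
    rw [hu, norm_smul, Real.norm_eq_abs, abs_of_pos (inv_pos.mpr hnx), inv_mul_cancel₀ hnx.ne']
  have hxu : x = ‖x‖ • u := by
    rw [hu, smul_smul, mul_inv_cancel₀ hnx.ne', one_smul]
  have h1 : 0 < evalP (homogeneousComponent d q) x := by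
    rw [hxu, evalP_hc_smul]
    exact mul_pos (pow_pos hnx d) (hpos u huK hu1)
  have h2 : evalP (homogeneousComponent d q) x ≤ 0 := by
    have := hxmin 0 h0
    rwa [evalP_hc_zero hd] at this
  linarith

lemma solSet_empty_of_neg {n d : ℕ} (hd : 1 ≤ d) {K : Set (En n)}
    (hcone : ∀ v ∈ asympCone K, ∀ c : ℝ, 0 < c → c • v ∈ asympCone K)
    (q : MvPolynomial (Fin n) ℝ) {v : En n} (hvK : v ∈ asympCone K)
    (hneg : evalP (homogeneousComponent d q) v < 0) :
    solSet (asympCone K) (evalP (homogeneousComponent d q)) = ∅ := by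
  rw [Set.eq_empty_iff_forall_notMem]
  rintro x ⟨hxK, hxmin⟩
  set w := evalP (homogeneousComponent d q) v with hw
  set b := evalP (homogeneousComponent d q) x with hb
  set lam := max 1 (b / w + 1) with hlam
  have hlam1 : (1 : ℝ) ≤ lam := le_max_left _ _
  have hlampos : 0 < lam := lt_of_lt_of_le one_pos hlam1
  have h1 : b ≤ lam ^ d * w := by
    have := hxmin (lam • v) (hcone v hvK lam hlampos)
    rwa [evalP_hc_smul] at this
  have h2 : lam ^ d * w ≤ lam * w :=
    mul_le_mul_of_nonpos_right (le_self_pow₀ hlam1 (by omega)) hneg.le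
  have h3 : lam * w < b := by
    have hdiv : b / w < lam := lt_of_lt_of_le (lt_add_one _) (le_max_right _ _)
    exact (div_lt_iff_of_neg hneg).mp hdiv
  linarith
lemma totalDegree_hc_le {n d : ℕ} (p : MvPolynomial (Fin n) ℝ) :
    (homogeneousComponent d p).totalDegree ≤ d := by
  apply Finset.sup_le
  intro m hm
  rw [mem_support_iff, coeff_homogeneousComponent] at hm
  by_cases h : m.degree = d
  · exact le_of_eq h
  · rw [if_neg h] at hm; exact absurd rfl hm

/-- The set `R_K` of polynomials `g` of degree exactly `d` such that `Sol(K∞, g_d)` is bounded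
is open in the space `P_d` of polynomials of degree at most `d` (with the `ℓ2` coefficient
metric). -/
theorem stmt8 {n d : ℕ} (hd : 1 ≤ d) (K : Set (En n)) (hKne : K.Nonempty) (hKcl : IsClosed K) :
    ∀ g : MvPolynomial (Fin n) ℝ, g.totalDegree = d →
      IsBounded (solSet (asympCone K) (evalP (homogeneousComponent d g))) →
      ∃ ε > 0, ∀ g' : MvPolynomial (Fin n) ℝ, g'.totalDegree ≤ d → l2Norm (g' - g) < ε →
        g'.totalDegree = d ∧
        IsBounded (solSet (asympCone K) (evalP (homogeneousComponent d g'))) := by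
  classical
  intro g hgdeg hbd
  have h0 : (0 : En n) ∈ asympCone K := zero_mem_asympCone K hKne
  have hcone : ∀ v ∈ asympCone K, ∀ c : ℝ, 0 < c → c • v ∈ asympCone K :=
    fun v hv c hc => smul_mem_asympCone hv hc
  have hg0 : g ≠ 0 := by
    intro h; rw [h, totalDegree_zero] at hgdeg; omega
  obtain ⟨m₀, hm₀s, hm₀d⟩ := Finset.exists_mem_eq_sup g.support
    (MvPolynomial.support_nonempty.mpr hg0) (fun m => m.sum fun _ e => e)
  rw [← totalDegree, hgdeg] at hm₀d
  set c0 := |coeff m₀ g| with hc0def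
  have hc0 : 0 < c0 := abs_pos.mpr (mem_support_iff.mp hm₀s)
  set N : ℝ := (((d + 1) ^ n : ℕ) : ℝ) with hNdef
  have hN1 : (1 : ℝ) ≤ N := by
    rw [hNdef]; exact_mod_cast Nat.one_le_pow n (d + 1) (by omega)
  have hN1pos : (0 : ℝ) < N + 1 := by linarith
  -- degree of nearby polynomials
  have hdeg' : ∀ g' : MvPolynomial (Fin n) ℝ, g'.totalDegree ≤ d → l2Norm (g' - g) < c0 →
      g'.totalDegree = d := by
    intro g' hle hl2
    have hco : coeff m₀ g' ≠ 0 := by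
      intro h
      have h1 : |coeff m₀ (g' - g)| ≤ l2Norm (g' - g) := abs_coeff_le_l2Norm _ _
      rw [coeff_sub, h, zero_sub, abs_neg] at h1
      rw [hc0def] at hl2
      linarith
    have h2 := le_totalDegree (p := g') (mem_support_iff.mpr hco)
    rw [← hm₀d] at h2
    omega
  -- perturbation bound for evaluations on the unit ball
  have hpert : ∀ g' : MvPolynomial (Fin n) ℝ, ∀ v : En n, ‖v‖ ≤ 1 →
      |evalP (homogeneousComponent d g') v - evalP (homogeneousComponent d g) v|
        ≤ N * l2Norm (g' - g) := by
    intro g' v hv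
    have h1 : evalP (homogeneousComponent d g') v - evalP (homogeneousComponent d g) v
        = evalP (homogeneousComponent d (g' - g)) v := by
      rw [map_sub (homogeneousComponent d)]
      simp only [evalP]
      rw [map_sub]
    rw [h1]
    calc |evalP (homogeneousComponent d (g' - g)) v|
        ≤ N * l2Norm (homogeneousComponent d (g' - g)) :=
          abs_evalP_le _ (totalDegree_hc_le _) v hv
      _ ≤ N * l2Norm (g' - g) :=
          mul_le_mul_of_nonneg_left (l2Norm_homogeneousComponent_le _) (by linarith)
  by_cases hneg : ∃ v ∈ asympCone K, evalP (homogeneousComponent d g) v < 0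
  · -- Case A : the top form is negative somewhere on the cone
    obtain ⟨v, hvK, hvneg⟩ := hneg
    have hv0 : v ≠ 0 := by
      intro h; rw [h, evalP_hc_zero hd] at hvneg; exact lt_irrefl _ hvneg
    have hnv : 0 < ‖v‖ := norm_pos_iff.mpr hv0
    set u := ‖v‖⁻¹ • v with hu
    have huK : u ∈ asympCone K := hcone v hvK _ (inv_pos.mpr hnv)
    have hu1 : ‖u‖ = 1 := by
      rw [hu, norm_smul, Real.norm_eq_abs, abs_of_pos (inv_pos.mpr hnv), inv_mul_cancel₀ hnv.ne']
    have huneg : evalP (homogeneousComponent d g) u < 0 := by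
      rw [hu, evalP_hc_smul]
      exact mul_neg_of_pos_of_neg (pow_pos (inv_pos.mpr hnv) d) hvneg
    set δ := -evalP (homogeneousComponent d g) u with hδ
    have hδpos : 0 < δ := neg_pos.mpr huneg
    refine ⟨min c0 (δ / (N + 1)), lt_min hc0 (by positivity), ?_⟩
    intro g' hle hl2
    refine ⟨hdeg' g' hle (lt_of_lt_of_le hl2 (min_le_left _ _)), ?_⟩
    have hl2δ : l2Norm (g' - g) < δ / (N + 1) := lt_of_lt_of_le hl2 (min_le_right _ _)
    have key : l2Norm (g' - g) * (N + 1) < δ := (lt_div_iff₀ hN1pos).mp hl2δ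
    have h4 : evalP (homogeneousComponent d g') u - evalP (homogeneousComponent d g) u
        ≤ N * l2Norm (g' - g) := le_trans (le_abs_self _) (hpert g' u hu1.le)
    have huneg' : evalP (homogeneousComponent d g') u < 0 := by
      nlinarith [l2Norm_nonneg (g' - g)]
    rw [solSet_empty_of_neg hd hcone g' huK huneg']
    exact Bornology.isBounded_empty
  · -- Case B : the top form is nonnegative on the cone
    push_neg at hneg
    have hstrict : ∀ v ∈ asympCone K, ‖v‖ = 1 → 0 < evalP (homogeneousComponent d g) v := by
      intro v hvK hv1
      rcases lt_or_eq_of_le (hneg v hvK) with h | h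
      · exact h
      · exfalso
        obtain ⟨C, hC⟩ := isBounded_iff_forall_norm_le.mp hbd
        set lam := max 1 (C + 1) with hlamdef
        have hlam1 : (1 : ℝ) ≤ lam := le_max_left _ _
        have hlampos : 0 < lam := lt_of_lt_of_le one_pos hlam1
        have hmem : lam • v ∈ solSet (asympCone K) (evalP (homogeneousComponent d g)) := by
          refine ⟨hcone v hvK lam hlampos, ?_⟩
          intro y hy
          rw [evalP_hc_smul, ← h, mul_zero]
          exact hneg y hy
        have hnorm := hC _ hmem
        rw [norm_smul, hv1, mul_one, Real.norm_eq_abs, abs_of_pos hlampos] at hnorm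
        have : C + 1 ≤ lam := le_max_right _ _
        linarith
    set S := asympCone K ∩ Metric.sphere (0 : En n) 1 with hSdef
    by_cases hSne : S.Nonempty
    · have hScomp : IsCompact S :=
        (isCompact_sphere (0 : En n) 1).inter_left (isClosed_asympCone K)
      obtain ⟨v₀, hv₀S, hmin'⟩ := hScomp.exists_isMinOn hSne
        ((continuous_evalP (homogeneousComponent d g)).continuousOn)
      have hmin : ∀ v ∈ S, evalP (homogeneousComponent d g) v₀ ≤ evalP (homogeneousComponent d g) v :=
        fun v hv => hmin' hv
      have hv₀1 : ‖v₀‖ = 1 := mem_sphere_zero_iff_norm.mp hv₀S.2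
      set μ := evalP (homogeneousComponent d g) v₀ with hμ
      have hμpos : 0 < μ := hstrict v₀ hv₀S.1 hv₀1
      refine ⟨min c0 (μ / (N + 1)), lt_min hc0 (by positivity), ?_⟩
      intro g' hle hl2
      refine ⟨hdeg' g' hle (lt_of_lt_of_le hl2 (min_le_left _ _)), ?_⟩
      apply solSet_bounded_of_pos hd h0 hcone
      intro v hvK hv1
      have hl2μ : l2Norm (g' - g) < μ / (N + 1) := lt_of_lt_of_le hl2 (min_le_right _ _)
      have key : l2Norm (g' - g) * (N + 1) < μ := (lt_div_iff₀ hN1pos).mp hl2μ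
      have hglow : μ ≤ evalP (homogeneousComponent d g) v :=
        hmin v ⟨hvK, mem_sphere_zero_iff_norm.mpr hv1⟩
      have h4 : evalP (homogeneousComponent d g) v - evalP (homogeneousComponent d g') v
          ≤ N * l2Norm (g' - g) := by
        have h5 := neg_abs_le (evalP (homogeneousComponent d g') v
          - evalP (homogeneousComponent d g) v)
        have h6 := hpert g' v hv1.le
        linarith
      nlinarith [l2Norm_nonneg (g' - g)]
    · refine ⟨c0, hc0, ?_⟩
      intro g' hle hl2
      refine ⟨hdeg' g' hle hl2, ?_⟩
      apply solSet_bounded_of_pos hd h0 hcone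
      intro v hvK hv1
      have hvS : v ∈ S := ⟨hvK, mem_sphere_zero_iff_norm.mpr hv1⟩
      exact absurd ⟨v, hvS⟩ hSne
end
end
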